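/- Let S = ℕ𝒜 be a numerical semigroup of Northcott type with generators a_1,…,a_n, exponents u_{ij} > 0, σ = (1 2 ⋯ n−1), and N = ∑_{i=1}^{n-1}(u_{ni}+u_{σ(i),i}−1)·a_i. Then the set of pseudo-Frobenius numbers of S is PF(S) = { N − u_{σ(j),j}·a_j − a_n : j ∈ {1,…,n−1} }, these n−1 values are pairwise distinct, and hence the type of S equals n−1. -/

import Mathlib

open MvPolynomial

/-- `σ` : the cycle `(1 2 ⋯ n−1)` in 0-based indexing on `{0,…,n-2}`. -/
def ntSig (n i : ℕ) : ℕ := if i = n - 2 then 0 else i + 1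

/-- `σ⁻¹` in 0-based indexing on `{0,…,n-2}`. -/
def ntTau (n i : ℕ) : ℕ := if i = 0 then n - 2 else i - 1

/-- The Northcott binomial `f_i = x_i^{u_{ni}+u_{σ(i),i}} − x_{σ⁻¹(i)}^{u_{i,σ⁻¹(i)}} x_n^{u_{in}}`
(0-based: index `n-1` plays the role of the paper's `n`). -/
noncomputable def ntF (K : Type*) [Field K] (n : ℕ) (hn : 3 ≤ n) (u : ℕ → ℕ → ℕ)
    (i : Fin (n - 1)) : MvPolynomial (Fin n) K :=
  X (⟨(i : ℕ), by have := i.isLt; omega⟩ : Fin n) ^ (u (n - 1) i + u (ntSig n i) i)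
    - X (⟨ntTau n i, by have := i.isLt; unfold ntTau; split <;> omega⟩ : Fin n) ^ (u i (ntTau n i))
      * X (⟨n - 1, by omega⟩ : Fin n) ^ (u i (n - 1))

/-- The Northcott binomial `D = x_1^{u_{n1}}⋯x_{n-1}^{u_{n,n-1}} − x_n^{∑ u_{in}}`. -/
noncomputable def ntD (K : Type*) [Field K] (n : ℕ) (hn : 3 ≤ n) (u : ℕ → ℕ → ℕ) :
    MvPolynomial (Fin n) K :=
  (∏ i : Fin (n - 1), X (⟨(i : ℕ), by have := i.isLt; omega⟩ : Fin n) ^ (u (n - 1) i))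
    - X (⟨n - 1, by omega⟩ : Fin n) ^ (∑ i : Fin (n - 1), u (i : ℕ) (n - 1))

/-- The critical ideal of Northcott type `⟨f_1,…,f_{n-1},D⟩`. -/
noncomputable def ntIdeal (K : Type*) [Field K] (n : ℕ) (hn : 3 ≤ n) (u : ℕ → ℕ → ℕ) :
    Ideal (MvPolynomial (Fin n) K) :=
  Ideal.span (Set.range (ntF K n hn u) ∪ {ntD K n hn u})

/-- Positivity of the relevant exponents `u_{ij} > 0`. -/
def ntPos (n : ℕ) (u : ℕ → ℕ → ℕ) : Prop :=
  ∀ i, i < n - 1 → 0 < u (n - 1) i ∧ 0 < u i (n - 1) ∧ 0 < u i (ntTau n i) ∧ 0 < u (ntSig n i) i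

namespace NTAux

variable {n : ℕ} (u : ℕ → ℕ → ℕ)

/-- vectors of exponents -/
abbrev M (n : ℕ) := Fin n → ℕ

def emb (i : Fin (n - 1)) : Fin n := ⟨i, lt_of_lt_of_le i.isLt (Nat.sub_le n 1)⟩

def lastF (hn : 3 ≤ n) : Fin n := ⟨n - 1, by omega⟩

def sigF (i : Fin (n - 1)) : Fin (n - 1) :=
  ⟨ntSig n i, by have := i.isLt; unfold ntSig; split <;> omega⟩

def tauF (i : Fin (n - 1)) : Fin (n - 1) :=
  ⟨ntTau n i, by have := i.isLt; unfold ntTau; split <;> omega⟩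

@[simp] lemma emb_val (i : Fin (n - 1)) : (emb i : ℕ) = i := rfl
@[simp] lemma lastF_val (hn : 3 ≤ n) : (lastF hn : ℕ) = n - 1 := rfl
@[simp] lemma sigF_val (i : Fin (n - 1)) : (sigF i : ℕ) = ntSig n i := rfl
@[simp] lemma tauF_val (i : Fin (n - 1)) : (tauF i : ℕ) = ntTau n i := rfl

lemma emb_injective : Function.Injective (emb (n := n)) := by
  intro i j h
  exact Fin.ext (by simpa [Fin.ext_iff] using h)

lemma emb_ne_lastF (hn : 3 ≤ n) (i : Fin (n - 1)) : emb i ≠ lastF hn := by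
  have := i.isLt
  simp [Fin.ext_iff]; omega

lemma sigF_tauF (i : Fin (n - 1)) : sigF (tauF i) = i := by
  have hi := i.isLt
  apply Fin.ext
  show ntSig n (ntTau n ↑i) = ↑i
  unfold ntSig ntTau
  by_cases h : (i : ℕ) = 0
  · simp only [h, if_pos rfl, if_pos]
  · rw [if_neg h]; split <;> omega

lemma tauF_sigF (i : Fin (n - 1)) : tauF (sigF i) = i := by
  have hi := i.isLt
  apply Fin.ext
  show ntTau n (ntSig n ↑i) = ↑i
  unfold ntSig ntTau
  by_cases h : (i : ℕ) = n - 2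
  · simp only [h, if_pos rfl, if_pos]
  · rw [if_neg h]; split <;> omega

/-- iterates of `tauF` -/
def tpow (m : ℕ) (i : Fin (n - 1)) : Fin (n - 1) := tauF^[m] i

@[simp] lemma tpow_zero (i : Fin (n - 1)) : tpow 0 i = i := rfl

lemma tpow_succ (m : ℕ) (i : Fin (n - 1)) : tpow (m + 1) i = tpow m (tauF i) := by
  simp [tpow, Function.iterate_succ_apply]

lemma tpow_succ' (m : ℕ) (i : Fin (n - 1)) : tpow (m + 1) i = tauF (tpow m i) := by
  simp [tpow, Function.iterate_succ_apply']

lemma tpow_val (m : ℕ) (hm : m ≤ n - 2) (i : Fin (n - 1)) :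
    (tpow m i : ℕ) = if m ≤ (i : ℕ) then (i : ℕ) - m else (i : ℕ) + (n - 1) - m := by
  induction m with
  | zero => simp
  | succ k ih =>
    have hik := i.isLt
    have hlt := (tpow k i).isLt
    rw [tpow_succ']
    have hk : (tpow k i : ℕ) = if k ≤ (i : ℕ) then (i : ℕ) - k else (i : ℕ) + (n - 1) - k :=
      ih (by omega)
    show ntTau n (tpow k i) = _
    unfold ntTau
    split at hk <;> (split <;> split <;> omega)

lemma tpow_sigF (i : Fin (n - 1)) (hn : 3 ≤ n) : tpow (n - 2) i = sigF i := by
  have hv := tpow_val (n - 2) (le_refl _) i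
  have hik := i.isLt
  apply Fin.ext
  rw [hv]
  show _ = ntSig n ↑i
  unfold ntSig
  split <;> split <;> omega

lemma tpow_cycle (i : Fin (n - 1)) (hn : 3 ≤ n) : tpow (n - 1) i = i := by
  have h1 : tpow (n - 1) i = tauF (tpow (n - 2) i) := by
    rw [← tpow_succ']; congr 1; omega
  rw [h1, tpow_sigF _ hn, tauF_sigF]



@[simp] lemma tpow_one (i : Fin (n - 1)) : tpow 1 i = tauF i := by
  simp [tpow]

/-! ### vectors and rules -/

def sing (x : Fin n) (k : ℕ) : M n := fun y => if y = x then k else 0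

@[simp] lemma sing_apply (x : Fin n) (k : ℕ) (y : Fin n) :
    sing x k y = if y = x then k else 0 := rfl

lemma sing_add_sing (x : Fin n) (p q : ℕ) : sing x p + sing x q = sing x (p + q) := by
  funext y; simp only [Pi.add_apply, sing_apply]; split <;> simp

def cc (n : ℕ) (u : ℕ → ℕ → ℕ) (k : ℕ) : ℕ := u (n - 1) k + u (ntSig n k) k

def EE (n : ℕ) (u : ℕ → ℕ → ℕ) : ℕ := ∑ i : Fin (n - 1), u (i : ℕ) (n - 1)

def uvec (n : ℕ) (u : ℕ → ℕ → ℕ) : M n := fun x => if (x : ℕ) < n - 1 then u (n - 1) (x : ℕ) else 0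

def lhs (n : ℕ) (u : ℕ → ℕ → ℕ) : Option (Fin (n - 1)) → M n
  | some i => sing (emb i) (cc n u i)
  | none => uvec n u

def rhs (n : ℕ) (u : ℕ → ℕ → ℕ) (hn : 3 ≤ n) : Option (Fin (n - 1)) → M n
  | some i => sing (emb (tauF i)) (u (i : ℕ) (ntTau n (i : ℕ))) + sing (lastF hn) (u (i : ℕ) (n - 1))
  | none => sing (lastF hn) (EE n u)

def step (n : ℕ) (u : ℕ → ℕ → ℕ) (hn : 3 ≤ n) (v w : M n) : Prop :=
  ∃ ρ δ, v = δ + lhs n u ρ ∧ w = δ + rhs n u hn ρ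

lemma uvec_eq_sum :
    uvec n u = ∑ i : Fin (n - 1), sing (emb i) (u (n - 1) (i : ℕ)) := by
  funext x
  rw [Finset.sum_apply]
  simp only [sing_apply]
  by_cases hx : (x : ℕ) < n - 1
  · have hcond : ∀ i : Fin (n - 1), (x = emb i) = (i = (⟨(x : ℕ), hx⟩ : Fin (n - 1))) := by
      intro i
      apply propext
      constructor <;> (intro h; apply Fin.ext; simpa [Fin.ext_iff] using h.symm)
    simp_rw [hcond]
    rw [Finset.sum_ite_eq' Finset.univ (⟨(x : ℕ), hx⟩ : Fin (n - 1))
      (fun i => u (n - 1) (i : ℕ))]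
    simp [uvec, hx]
  · have hne : ∀ i : Fin (n - 1), x ≠ emb i := by
      intro i h
      exact hx (by rw [h]; exact lt_of_lt_of_le i.isLt (le_refl _) |>.trans_le (le_refl _) |>.trans_le (le_refl _))
    simp [uvec, hx, hne]

/-- the cyclic reindexing bijection -/
lemma sum_cycle (hn : 3 ≤ n) (i : Fin (n - 1)) {β : Type*} [AddCommMonoid β] (f : Fin (n - 1) → β) :
    ∑ s ∈ Finset.range (n - 2), f (tpow (s + 1) i) = ∑ k ∈ Finset.univ.erase i, f k := by
  have hik := i.isLt
  apply Finset.sum_bij' (i := fun s _ => tpow (s + 1) i)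
    (j := fun k _ => if (k : ℕ) < (i : ℕ) then (i : ℕ) - (k : ℕ) - 1 else (i : ℕ) + (n - 2) - (k : ℕ))
  · intro s hs
    rw [Finset.mem_range] at hs
    have hv := tpow_val (s + 1) (by omega) i
    rw [Finset.mem_erase]
    refine ⟨?_, Finset.mem_univ _⟩
    intro h
    rw [Fin.ext_iff] at h
    rw [hv] at h
    split at h <;> omega
  · intro k hk
    rw [Finset.mem_erase] at hk
    have hkk := k.isLt
    rw [Finset.mem_range]
    have : (k : ℕ) ≠ (i : ℕ) := fun h => hk.1 (Fin.ext h)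
    split <;> omega
  · intro s hs
    rw [Finset.mem_range] at hs
    have hv := tpow_val (s + 1) (by omega) i
    by_cases hc : s + 1 ≤ (i : ℕ)
    · rw [if_pos hc] at hv
      rw [hv, if_pos (by omega)]
      omega
    · rw [if_neg hc] at hv
      rw [hv, if_neg (by omega)]
      omega
  · intro k hk
    rw [Finset.mem_erase] at hk
    have hkk := k.isLt
    have hne : (k : ℕ) ≠ (i : ℕ) := fun h => hk.1 (Fin.ext h)
    apply Fin.ext
    split
    · have hv := tpow_val ((i : ℕ) - (k : ℕ) - 1 + 1) (by omega) i
      rw [hv]; split <;> omega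
    · have hv := tpow_val ((i : ℕ) + (n - 2) - (k : ℕ) + 1) (by omega) i
      rw [hv]; split <;> omega
  · intro s hs
    rfl

/-! ### the cascade -/

def Avec (n : ℕ) (u : ℕ → ℕ → ℕ) (hn : 3 ≤ n) (j : Fin (n - 1)) (m s0 : ℕ) : M n :=
  sing (emb j) (cc n u (j : ℕ))
    + (∑ s ∈ Finset.range m, sing (emb (tpow (s + 1) j)) (u (n - 1) ((tpow (s + 1) j : ℕ))))
    + sing (lastF hn) s0

def Bvec (n : ℕ) (u : ℕ → ℕ → ℕ) (hn : 3 ≤ n) (j : Fin (n - 1)) (m s0 : ℕ) : M n :=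
  sing (emb (tpow (m + 1) j)) (u ((tpow m j : ℕ)) ((tpow (m + 1) j : ℕ)))
    + sing (lastF hn) (s0 + ∑ s ∈ Finset.range (m + 1), u ((tpow s j : ℕ)) (n - 1))

lemma shift_sum (m : ℕ) (j : Fin (n - 1)) {β : Type*} [AddCommMonoid β] (F : Fin (n - 1) → β) :
    ∑ s ∈ Finset.range (m + 1), F (tpow (s + 1) j)
      = F (tauF j) + ∑ s ∈ Finset.range m, F (tpow (s + 1) (tauF j)) := by
  rw [Finset.sum_range_succ' (fun s => F (tpow (s + 1) j)) m]
  have h1 : ∀ s : ℕ, tpow (s + 1 + 1) j = tpow (s + 1) (tauF j) := fun s => tpow_succ (s + 1) j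
  simp only [h1, tpow_one]
  exact add_comm _ _

lemma cc_tauF (j : Fin (n - 1)) :
    cc n u ((tauF j : ℕ)) = u (n - 1) ((tauF j : ℕ)) + u (j : ℕ) (ntTau n (j : ℕ)) := by
  unfold cc
  have h := congrArg Fin.val (sigF_tauF j)
  rw [sigF_val] at h
  rw [h]
  rfl

lemma cascade (hn : 3 ≤ n) : ∀ (m : ℕ) (j : Fin (n - 1)) (s0 : ℕ),
    Relation.ReflTransGen (step n u hn) (Avec n u hn j m s0) (Bvec n u hn j m s0) := by
  intro m
  induction m with
  | zero =>
    intro j s0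
    apply Relation.ReflTransGen.single
    refine ⟨some j, sing (lastF hn) s0, ?_, ?_⟩
    · show Avec n u hn j 0 s0 = sing (lastF hn) s0 + sing (emb j) (cc n u (j : ℕ))
      unfold Avec
      rw [Finset.range_zero, Finset.sum_empty]
      abel
    · show Bvec n u hn j 0 s0 = sing (lastF hn) s0
        + (sing (emb (tauF j)) (u (j : ℕ) (ntTau n (j : ℕ))) + sing (lastF hn) (u (j : ℕ) (n - 1)))
      unfold Bvec
      rw [Finset.sum_range_one]
      simp only [zero_add, tpow_one, tpow_zero, tauF_val]
      rw [← sing_add_sing (lastF hn) s0]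
      abel
  | succ m ih =>
    intro j s0
    have hstep : step n u hn (Avec n u hn j (m + 1) s0) (Avec n u hn (tauF j) m (s0 + u (j : ℕ) (n - 1))) := by
      refine ⟨some j,
        (∑ s ∈ Finset.range (m + 1), sing (emb (tpow (s + 1) j)) (u (n - 1) ((tpow (s + 1) j : ℕ))))
          + sing (lastF hn) s0, ?_, ?_⟩
      · show Avec n u hn j (m + 1) s0 = _ + sing (emb j) (cc n u (j : ℕ))
        unfold Avec
        abel
      · show Avec n u hn (tauF j) m (s0 + u (j : ℕ) (n - 1)) = _ +
          (sing (emb (tauF j)) (u (j : ℕ) (ntTau n (j : ℕ))) + sing (lastF hn) (u (j : ℕ) (n - 1)))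
        unfold Avec
        rw [shift_sum m j (fun k => sing (emb k) (u (n - 1) (k : ℕ)))]
        rw [cc_tauF u j]
        rw [← sing_add_sing (emb (tauF j))]
        rw [← sing_add_sing (lastF hn) s0 (u (j : ℕ) (n - 1))]
        abel
    have hB : Bvec n u hn (tauF j) m (s0 + u (j : ℕ) (n - 1)) = Bvec n u hn j (m + 1) s0 := by
      have e1 : tpow (m + 1) (tauF j) = tpow (m + 1 + 1) j := (tpow_succ (m + 1) j).symm
      have e2 : tpow m (tauF j) = tpow (m + 1) j := (tpow_succ m j).symm
      have hsum : s0 + u (j : ℕ) (n - 1) + ∑ s ∈ Finset.range (m + 1), u ((tpow s (tauF j) : ℕ)) (n - 1)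
          = s0 + ∑ s ∈ Finset.range (m + 1 + 1), u ((tpow s j : ℕ)) (n - 1) := by
        rw [Finset.sum_range_succ' (fun s => u ((tpow s j : ℕ)) (n - 1)) (m + 1)]
        have h1 : ∀ s : ℕ, tpow (s + 1) j = tpow s (tauF j) := fun s => tpow_succ s j
        simp only [h1, tpow_zero]
        omega
      unfold Bvec
      rw [e1, e2, hsum]
    rw [← hB]
    exact Relation.ReflTransGen.head hstep (ih (tauF j) (s0 + u (j : ℕ) (n - 1)))

/-! ### local confluence -/

lemma uvec_emb (i : Fin (n - 1)) : uvec n u (emb i) = u (n - 1) (i : ℕ) := by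
  simp [uvec, i.isLt]

lemma uvec_lastF (hn : 3 ≤ n) : uvec n u (lastF hn) = 0 := by
  simp [uvec, lastF]

def path2 (n : ℕ) (u : ℕ → ℕ → ℕ) (hn : 3 ≤ n) (i : Fin (n - 1)) : M n :=
  sing (emb i) (u (ntSig n (i : ℕ)) (i : ℕ)) + sing (lastF hn) (EE n u)

lemma uvec'_sum (i : Fin (n - 1)) :
    (fun x => if x = emb i then 0 else uvec n u x)
      = ∑ k ∈ Finset.univ.erase i, sing (emb k) (u (n - 1) (k : ℕ)) := by
  have e : (∑ k ∈ Finset.univ.erase i, sing (emb k) (u (n - 1) (k : ℕ)))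
      + sing (emb i) (u (n - 1) (i : ℕ)) = uvec n u := by
    rw [uvec_eq_sum u]
    exact Finset.sum_erase_add _ _ (Finset.mem_univ i)
  have key : (fun x => if x = emb i then 0 else uvec n u x)
      + sing (emb i) (u (n - 1) (i : ℕ)) = uvec n u := by
    funext x
    simp only [Pi.add_apply, sing_apply]
    by_cases hx : x = emb i
    · rw [if_pos hx, if_pos hx, hx, uvec_emb u i]
      exact zero_add _
    · rw [if_neg hx, if_neg hx, add_zero]
  exact add_right_cancel (key.trans e.symm)

lemma key1 (hn : 3 ≤ n) (i : Fin (n - 1)) :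
    (fun x => if x = emb i then 0 else uvec n u x) + rhs n u hn (some i)
      = Avec n u hn (tauF i) (n - 3) (u (i : ℕ) (n - 1)) := by
  rw [uvec'_sum u i, ← sum_cycle hn i (fun k => sing (emb k) (u (n - 1) (k : ℕ)))]
  have h2 : n - 2 = (n - 3) + 1 := by omega
  rw [h2, shift_sum (n - 3) i (fun k => sing (emb k) (u (n - 1) (k : ℕ)))]
  show _ + (sing (emb (tauF i)) (u (i : ℕ) (ntTau n (i : ℕ))) + sing (lastF hn) (u (i : ℕ) (n - 1))) = _
  unfold Avec
  rw [cc_tauF u i, ← sing_add_sing (emb (tauF i))]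
  abel

lemma key2 (hn : 3 ≤ n) (i : Fin (n - 1)) :
    Bvec n u hn (tauF i) (n - 3) (u (i : ℕ) (n - 1)) = path2 n u hn i := by
  unfold Bvec path2
  have e1 : tpow (n - 3 + 1) (tauF i) = i := by
    rw [show n - 3 + 1 = n - 2 by omega]
    have : tpow (n - 2) (tauF i) = tpow (n - 2 + 1) i := (tpow_succ (n - 2) i).symm
    rw [this, show n - 2 + 1 = n - 1 by omega, tpow_cycle i hn]
  have e2 : tpow (n - 3) (tauF i) = sigF i := by
    have : tpow (n - 3) (tauF i) = tpow (n - 3 + 1) i := (tpow_succ (n - 3) i).symm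
    rw [this, show n - 3 + 1 = n - 2 by omega, tpow_sigF i hn]
  have e3 : u (i : ℕ) (n - 1) + ∑ s ∈ Finset.range (n - 3 + 1), u ((tpow s (tauF i) : ℕ)) (n - 1)
      = EE n u := by
    have h1 : ∀ s : ℕ, tpow s (tauF i) = tpow (s + 1) i := fun s => (tpow_succ s i).symm
    simp only [h1]
    rw [show n - 3 + 1 = n - 2 by omega, sum_cycle hn i (fun k => u (k : ℕ) (n - 1))]
    have h5 := Finset.sum_erase_add Finset.univ (fun k : Fin (n - 1) => u (k : ℕ) (n - 1))
      (Finset.mem_univ i)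
    unfold EE
    beta_reduce at h5 ⊢
    omega
  rw [e1, e2, e3, sigF_val]

lemma step_add_left (hn : 3 ≤ n) (δ : M n) {v w : M n} (h : step n u hn v w) :
    step n u hn (δ + v) (δ + w) := by
  obtain ⟨ρ, δ', h1, h2⟩ := h
  exact ⟨ρ, δ + δ', by rw [h1, add_assoc], by rw [h2, add_assoc]⟩

lemma rtg_add_left (hn : 3 ≤ n) (δ : M n) {v w : M n}
    (h : Relation.ReflTransGen (step n u hn) v w) :
    Relation.ReflTransGen (step n u hn) (δ + v) (δ + w) := by
  induction h with
  | refl => exact Relation.ReflTransGen.refl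
  | tail _ hstep ih => exact Relation.ReflTransGen.tail ih (step_add_left u hn δ hstep)

/-- joinability of the critical pair: `R_i`-result reduces to the `D`-result. -/
lemma crit (hn : 3 ≤ n) (i : Fin (n - 1)) (δ : M n) :
    Relation.ReflTransGen (step n u hn)
      (δ + ((fun x => if x = emb i then 0 else uvec n u x) + rhs n u hn (some i)))
      (δ + path2 n u hn i) := by
  rw [key1 u hn i, ← key2 u hn i]
  exact rtg_add_left u hn δ (cascade u hn (n - 3) (tauF i) (u (i : ℕ) (n - 1)))

lemma locConf (hn : 3 ≤ n) {v w1 w2 : M n} (h1 : step n u hn v w1) (h2 : step n u hn v w2) :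
    ∃ d, Relation.ReflTransGen (step n u hn) w1 d ∧ Relation.ReflTransGen (step n u hn) w2 d := by
  obtain ⟨ρ1, δ1, hv1, hw1⟩ := h1
  obtain ⟨ρ2, δ2, hv2, hw2⟩ := h2
  by_cases hρ : ρ1 = ρ2
  · subst hρ
    have : δ1 = δ2 := by
      have := hv1.symm.trans hv2
      exact add_right_cancel this
    subst this
    exact ⟨w1, Relation.ReflTransGen.refl, by rw [hw1, hw2]⟩
  · -- helper for the (some i, none) critical pair
    have mixed : ∀ (i : Fin (n - 1)) (d1 d2 : M n),
        v = d1 + lhs n u (some i) → v = d2 + lhs n u none →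
        Relation.ReflTransGen (step n u hn) (d1 + rhs n u hn (some i)) (d2 + rhs n u hn none) := by
      intro i d1 d2 e1 e2
      set δ : M n := fun x => v x - (uvec n u x + sing (emb i) (u (ntSig n (i : ℕ)) (i : ℕ)) x) with hδ
      have hd1 : d1 = δ + (fun x => if x = emb i then 0 else uvec n u x) := by
        funext x
        have g1 := congrFun e1 x
        have g2 := congrFun e2 x
        simp only [Pi.add_apply, lhs, sing_apply] at g1 g2
        simp only [Pi.add_apply, hδ, sing_apply]
        by_cases hx : x = emb i
        · have hx' : uvec n u x = u (n - 1) (i : ℕ) := by rw [hx]; exact uvec_emb u i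
          rw [if_pos hx] at g1 ⊢
          rw [hx', if_pos hx]
          unfold cc at g1
          omega
        · rw [if_neg hx] at g1 ⊢
          rw [if_neg hx]
          omega
      have hd2 : d2 = δ + sing (emb i) (u (ntSig n (i : ℕ)) (i : ℕ)) := by
        funext x
        have g1 := congrFun e1 x
        have g2 := congrFun e2 x
        simp only [Pi.add_apply, lhs, sing_apply] at g1 g2
        simp only [Pi.add_apply, hδ, sing_apply]
        by_cases hx : x = emb i
        · have hx' : uvec n u x = u (n - 1) (i : ℕ) := by rw [hx]; exact uvec_emb u i
          rw [if_pos hx] at g1 ⊢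
          rw [hx'] at g2 ⊢
          unfold cc at g1
          omega
        · rw [if_neg hx] at g1 ⊢
          omega
      rw [hd1, hd2, add_assoc, add_assoc]
      have hrfl : sing (emb i) (u (ntSig n (i : ℕ)) (i : ℕ)) + rhs n u hn none
          = path2 n u hn i := rfl
      rw [hrfl]
      exact crit u hn i δ
    match ρ1, ρ2 with
    | some i, some j =>
      have hij : i ≠ j := fun h => hρ (by rw [h])
      set δ : M n := fun x => v x - lhs n u (some i) x - lhs n u (some j) x with hδ
      have e1 : δ1 = δ + lhs n u (some j) := by
        funext x
        have g1 := congrFun hv1 x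
        have g2 := congrFun hv2 x
        simp only [Pi.add_apply, lhs, sing_apply] at g1 g2 ⊢
        simp only [hδ, lhs, sing_apply]
        by_cases hxi : x = emb i <;> by_cases hxj : x = emb j
        · exact absurd (emb_injective (hxi.symm.trans hxj)) hij
        · rw [if_pos hxi] at g1 ⊢
          rw [if_neg hxj] at g2 ⊢
          omega
        · rw [if_neg hxi] at g1 ⊢
          rw [if_pos hxj] at g2 ⊢
          omega
        · rw [if_neg hxi] at g1 ⊢
          rw [if_neg hxj] at g2 ⊢
          omega
      have e2 : δ2 = δ + lhs n u (some i) := by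
        funext x
        have g1 := congrFun hv1 x
        have g2 := congrFun hv2 x
        simp only [Pi.add_apply, lhs, sing_apply] at g1 g2 ⊢
        simp only [hδ, lhs, sing_apply]
        by_cases hxi : x = emb i <;> by_cases hxj : x = emb j
        · exact absurd (emb_injective (hxi.symm.trans hxj)) hij
        · rw [if_pos hxi] at g1 ⊢
          rw [if_neg hxj] at g2 ⊢
          omega
        · rw [if_neg hxi] at g1 ⊢
          rw [if_pos hxj] at g2 ⊢
          omega
        · rw [if_neg hxi] at g1 ⊢
          rw [if_neg hxj] at g2 ⊢
          omega
      refine ⟨δ + rhs n u hn (some i) + rhs n u hn (some j), ?_, ?_⟩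
      · apply Relation.ReflTransGen.single
        refine ⟨some j, δ + rhs n u hn (some i), ?_, ?_⟩
        · rw [hw1, e1]; abel
        · abel
      · apply Relation.ReflTransGen.single
        refine ⟨some i, δ + rhs n u hn (some j), ?_, ?_⟩
        · rw [hw2, e2]; abel
        · abel
    | some i, none =>
      refine ⟨w2, ?_, Relation.ReflTransGen.refl⟩
      rw [hw1, hw2]
      exact mixed i δ1 δ2 hv1 hv2
    | none, some i =>
      refine ⟨w1, Relation.ReflTransGen.refl, ?_⟩
      rw [hw1, hw2]
      exact mixed i δ2 δ1 hv2 hv1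
    | none, none => exact absurd rfl hρ

/-! ### termination measure, Newman, joinability -/

variable (a : Fin n → ℕ)

def Wm (n : ℕ) (a : Fin n → ℕ) (v : M n) : ℕ := ∑ i : Fin (n - 1), v (emb i) * a (emb i)

lemma Wm_add (v w : M n) : Wm n a (v + w) = Wm n a v + Wm n a w := by
  simp [Wm, add_mul, Finset.sum_add_distrib]

lemma Wm_sing_emb (i : Fin (n - 1)) (t : ℕ) : Wm n a (sing (emb i) t) = t * a (emb i) := by
  unfold Wm
  have h : ∀ k : Fin (n - 1), sing (emb i) t (emb k) * a (emb k)
      = if k = i then t * a (emb i) else 0 := by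
    intro k
    simp only [sing_apply]
    by_cases h : k = i
    · rw [if_pos h, if_pos (by rw [h]), h]
    · rw [if_neg (fun hh => h (emb_injective hh)), if_neg h, zero_mul]
  rw [Finset.sum_congr rfl (fun k _ => h k), Finset.sum_ite_eq' Finset.univ i]
  simp

lemma Wm_sing_last (hn : 3 ≤ n) (t : ℕ) : Wm n a (sing (lastF hn) t) = 0 := by
  unfold Wm
  apply Finset.sum_eq_zero
  intro k _
  have h : emb k ≠ lastF hn := emb_ne_lastF hn k
  simp only [sing_apply]
  rw [if_neg h, zero_mul]

lemma Wm_uvec : Wm n a (uvec n u) = ∑ i : Fin (n - 1), u (n - 1) (i : ℕ) * a (emb i) := by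
  unfold Wm
  apply Finset.sum_congr rfl
  intro k _
  rw [uvec_emb]

lemma step_Wm (hn : 3 ≤ n)
    (hrel : ∀ i : Fin (n - 1), cc n u (i : ℕ) * a (emb i)
      = u (i : ℕ) (ntTau n (i : ℕ)) * a (emb (tauF i)) + u (i : ℕ) (n - 1) * a (lastF hn))
    (hupos : ∀ i : Fin (n - 1), 0 < u (i : ℕ) (n - 1))
    (hun : ∀ i : Fin (n - 1), 0 < u (n - 1) (i : ℕ))
    (hal : 0 < a (lastF hn)) (hae : ∀ i : Fin (n - 1), 0 < a (emb i))
    {v w : M n} (h : step n u hn v w) : Wm n a w < Wm n a v := by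
  obtain ⟨ρ, δ, hv, hw⟩ := h
  rw [hv, hw, Wm_add, Wm_add]
  match ρ with
  | some i =>
    show _ + Wm n a (sing (emb (tauF i)) _ + sing (lastF hn) _) < _ + Wm n a (sing (emb i) _)
    rw [Wm_add, Wm_sing_emb, Wm_sing_emb, Wm_sing_last]
    have h1 := hrel i
    have h2 := hupos i
    have h3 := hal
    have := Nat.mul_le_mul h2 h3
    omega
  | none =>
    show _ + Wm n a (sing (lastF hn) _) < _ + Wm n a (uvec n u)
    rw [Wm_sing_last, Wm_uvec]
    have hpos : 0 < ∑ i : Fin (n - 1), u (n - 1) (i : ℕ) * a (emb i) := by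
      apply Finset.sum_pos
      · intro k _
        exact Nat.mul_pos (hun k) (hae k)
      · exact ⟨⟨0, by omega⟩, Finset.mem_univ _⟩
    omega

lemma newman (hn : 3 ≤ n)
    (hW : ∀ {v w : M n}, step n u hn v w → Wm n a w < Wm n a v) :
    ∀ v w1 w2 : M n, Relation.ReflTransGen (step n u hn) v w1 →
      Relation.ReflTransGen (step n u hn) v w2 →
      ∃ d, Relation.ReflTransGen (step n u hn) w1 d ∧ Relation.ReflTransGen (step n u hn) w2 d := by
  suffices H : ∀ (N : ℕ) (v w1 w2 : M n), Wm n a v ≤ N →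
      Relation.ReflTransGen (step n u hn) v w1 → Relation.ReflTransGen (step n u hn) v w2 →
      ∃ d, Relation.ReflTransGen (step n u hn) w1 d ∧ Relation.ReflTransGen (step n u hn) w2 d by
    exact fun v w1 w2 h1 h2 => H (Wm n a v) v w1 w2 le_rfl h1 h2
  intro N
  induction N using Nat.strong_induction_on with
  | _ N ih =>
    intro v w1 w2 hN h1 h2
    rcases Relation.ReflTransGen.cases_head h1 with rfl | ⟨b1, hb1, hb1'⟩
    · exact ⟨w2, h2, Relation.ReflTransGen.refl⟩
    rcases Relation.ReflTransGen.cases_head h2 with rfl | ⟨c1, hc1, hc1'⟩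
    · exact ⟨w1, Relation.ReflTransGen.refl, h1⟩
    obtain ⟨e, he1, he2⟩ := locConf u hn hb1 hc1
    have hWb := hW hb1
    have hWc := hW hc1
    obtain ⟨p, hp1, hp2⟩ := ih (Wm n a b1) (by omega) b1 w1 e le_rfl hb1' he1
    obtain ⟨q, hq1, hq2⟩ := ih (Wm n a c1) (by omega) c1 w2 p le_rfl hc1' (he2.trans hp2)
    exact ⟨q, hp1.trans hq2, hq1⟩

/-! ### the join congruence -/

def joinR (n : ℕ) (u : ℕ → ℕ → ℕ) (hn : 3 ≤ n) (v w : M n) : Prop :=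
  ∃ d, Relation.ReflTransGen (step n u hn) v d ∧ Relation.ReflTransGen (step n u hn) w d

lemma rtg_add_right (hn : 3 ≤ n) (δ : M n) {v w : M n}
    (h : Relation.ReflTransGen (step n u hn) v w) :
    Relation.ReflTransGen (step n u hn) (v + δ) (w + δ) := by
  rw [add_comm v δ, add_comm w δ]
  exact rtg_add_left u hn δ h

/-- the joinability congruence (given termination) -/
def jc (hn : 3 ≤ n) (a : Fin n → ℕ)
    (hW : ∀ {v w : M n}, step n u hn v w → Wm n a w < Wm n a v) : AddCon (M n) where
  r := joinR n u hn
  iseqv := by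
    constructor
    · exact fun v => ⟨v, Relation.ReflTransGen.refl, Relation.ReflTransGen.refl⟩
    · rintro v w ⟨d, h1, h2⟩
      exact ⟨d, h2, h1⟩
    · rintro v w x ⟨d, h1, h2⟩ ⟨e, h3, h4⟩
      obtain ⟨f, hf1, hf2⟩ := newman u a hn hW w d e h2 h3
      exact ⟨f, h1.trans hf1, h4.trans hf2⟩
  add' := by
    rintro v w x y ⟨d, h1, h2⟩ ⟨e, h3, h4⟩
    refine ⟨d + e, ?_, ?_⟩
    · exact (rtg_add_right u hn x h1).trans (rtg_add_left u hn d h3)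
    · exact (rtg_add_right u hn y h2).trans (rtg_add_left u hn d h4)

lemma jc_gen (hn : 3 ≤ n) (a : Fin n → ℕ) (hW) (ρ : Option (Fin (n - 1))) :
    (jc u hn a hW) (lhs n u ρ) (rhs n u hn ρ) := by
  refine ⟨rhs n u hn ρ, ?_, Relation.ReflTransGen.refl⟩
  exact Relation.ReflTransGen.single ⟨ρ, 0, (zero_add _).symm, (zero_add _).symm⟩

/-! ### reduced vectors -/

def reduced (n : ℕ) (u : ℕ → ℕ → ℕ) (v : M n) : Prop :=
  (∀ i : Fin (n - 1), v (emb i) < cc n u (i : ℕ)) ∧ (∃ i : Fin (n - 1), v (emb i) < u (n - 1) (i : ℕ))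

lemma reduced_no_step (hn : 3 ≤ n) {v w : M n} (hr : reduced n u v) : ¬ step n u hn v w := by
  rintro ⟨ρ, δ, hv, -⟩
  match ρ with
  | some i =>
    have h := congrFun hv (emb i)
    simp [Pi.add_apply, lhs, sing_apply] at h
    have := hr.1 i
    omega
  | none =>
    obtain ⟨i0, hi0⟩ := hr.2
    have h := congrFun hv (emb i0)
    rw [Pi.add_apply] at h
    have h2 : lhs n u none (emb i0) = u (n - 1) (i0 : ℕ) := uvec_emb u i0
    rw [h2] at h
    omega

lemma nf_exists (hn : 3 ≤ n) {a : Fin n → ℕ}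
    (hW : ∀ {v w : M n}, step n u hn v w → Wm n a w < Wm n a v) (v : M n) :
    ∃ w, Relation.ReflTransGen (step n u hn) v w ∧ reduced n u w := by
  suffices H : ∀ (N : ℕ) (v : M n), Wm n a v ≤ N →
      ∃ w, Relation.ReflTransGen (step n u hn) v w ∧ reduced n u w by
    exact H (Wm n a v) v le_rfl
  intro N
  induction N using Nat.strong_induction_on with
  | _ N ih =>
    intro v hN
    by_cases hred : reduced n u v
    · exact ⟨v, Relation.ReflTransGen.refl, hred⟩
    rw [reduced, not_and_or] at hred
    have hstep : ∃ w, step n u hn v w := by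
      rcases hred with hred | hred
      · push_neg at hred
        obtain ⟨i, hi⟩ := hred
        refine ⟨(fun x => v x - lhs n u (some i) x) + rhs n u hn (some i),
          some i, fun x => v x - lhs n u (some i) x, ?_, rfl⟩
        funext x
        simp only [Pi.add_apply, lhs, sing_apply]
        by_cases hx : x = emb i
        · rw [if_pos hx, hx]
          omega
        · rw [if_neg hx]
          omega
      · push_neg at hred
        refine ⟨(fun x => v x - uvec n u x) + rhs n u hn none,
          none, fun x => v x - uvec n u x, ?_, rfl⟩
        funext x
        show v x = v x - uvec n u x + uvec n u x
        by_cases hx : (x : ℕ) < n - 1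
        · have hxe : emb (⟨(x : ℕ), hx⟩ : Fin (n - 1)) = x := Fin.ext rfl
          have := hred ⟨(x : ℕ), hx⟩
          rw [hxe] at this
          have h3 : (((⟨(x : ℕ), hx⟩ : Fin (n - 1))) : ℕ) = (x : ℕ) := rfl
          rw [h3] at this
          have h2 : uvec n u x = u (n - 1) (x : ℕ) := by simp [uvec, hx]
          omega
        · have h2 : uvec n u x = 0 := by simp [uvec, hx]
          omega
    obtain ⟨w', hw'⟩ := hstep
    have hlt := hW hw'
    obtain ⟨w, hw1, hw2⟩ := ih (Wm n a w') (by omega) w' le_rfl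
    exact ⟨w, Relation.ReflTransGen.head hw' hw1, hw2⟩

lemma rtg_reduced {hn : 3 ≤ n} {v w : M n} (h : Relation.ReflTransGen (step n u hn) v w)
    (hr : reduced n u v) : v = w := by
  rcases Relation.ReflTransGen.cases_head h with rfl | ⟨c, hc, -⟩
  · rfl
  · exact absurd hc (reduced_no_step u hn hr)

lemma joinR_reduced_eq {hn : 3 ≤ n} {v w : M n} (h : joinR n u hn v w)
    (hv : reduced n u v) (hw : reduced n u w) : v = w := by
  obtain ⟨d, h1, h2⟩ := h
  exact (rtg_reduced u h1 hv).trans (rtg_reduced u h2 hw).symm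

/-! ### values -/

def valv (n : ℕ) (a : Fin n → ℕ) (v : M n) : ℕ := ∑ x, v x * a x

lemma valv_add (v w : M n) : valv n a (v + w) = valv n a v + valv n a w := by
  simp [valv, add_mul, Finset.sum_add_distrib]

lemma valv_sing (x : Fin n) (t : ℕ) : valv n a (sing x t) = t * a x := by
  unfold valv
  have h : ∀ y : Fin n, sing x t y * a y = if y = x then t * a x else 0 := by
    intro y
    simp only [sing_apply]
    by_cases h : y = x
    · rw [if_pos h, if_pos h, h]
    · rw [if_neg h, if_neg h, zero_mul]
  rw [Finset.sum_congr rfl (fun y _ => h y), Finset.sum_ite_eq' Finset.univ x]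
  simp

lemma valv_uvec : valv n a (uvec n u) = ∑ i : Fin (n - 1), u (n - 1) (i : ℕ) * a (emb i) := by
  rw [uvec_eq_sum u]
  rw [show ((∑ i : Fin (n - 1), sing (emb i) (u (n - 1) (i : ℕ))) : M n)
    = ∑ i : Fin (n - 1), sing (emb i) (u (n - 1) (i : ℕ)) from rfl]
  induction (Finset.univ : Finset (Fin (n - 1))) using Finset.induction_on with
  | empty => simp [valv]
  | insert _ _ hx ih =>
    rw [Finset.sum_insert hx, Finset.sum_insert hx, valv_add, ih, valv_sing]

lemma step_valv (hn : 3 ≤ n)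
    (hrel : ∀ i : Fin (n - 1), cc n u (i : ℕ) * a (emb i)
      = u (i : ℕ) (ntTau n (i : ℕ)) * a (emb (tauF i)) + u (i : ℕ) (n - 1) * a (lastF hn))
    (hrelD : ∑ i : Fin (n - 1), u (n - 1) (i : ℕ) * a (emb i) = EE n u * a (lastF hn))
    {v w : M n} (h : step n u hn v w) : valv n a v = valv n a w := by
  obtain ⟨ρ, δ, hv, hw⟩ := h
  rw [hv, hw, valv_add, valv_add]
  match ρ with
  | some i =>
    show _ + valv n a (sing (emb i) _) = _ + valv n a (sing (emb (tauF i)) _ + sing (lastF hn) _)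
    rw [valv_add, valv_sing, valv_sing, valv_sing]
    rw [hrel i]
  | none =>
    show _ + valv n a (uvec n u) = _ + valv n a (sing (lastF hn) _)
    rw [valv_uvec u a, valv_sing, hrelD]

lemma rtg_valv (hn : 3 ≤ n)
    (hrel : ∀ i : Fin (n - 1), cc n u (i : ℕ) * a (emb i)
      = u (i : ℕ) (ntTau n (i : ℕ)) * a (emb (tauF i)) + u (i : ℕ) (n - 1) * a (lastF hn))
    (hrelD : ∑ i : Fin (n - 1), u (n - 1) (i : ℕ) * a (emb i) = EE n u * a (lastF hn))
    {v w : M n}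
    (h : Relation.ReflTransGen (step n u hn) v w) : valv n a v = valv n a w := by
  induction h with
  | refl => rfl
  | tail _ hstep ih => exact ih.trans (step_valv u a hn hrel hrelD hstep)

lemma rtg_last_le (hn : 3 ≤ n) {v w : M n}
    (h : Relation.ReflTransGen (step n u hn) v w) : v (lastF hn) ≤ w (lastF hn) := by
  induction h with
  | refl => exact le_rfl
  | tail _ hstep ih =>
    obtain ⟨ρ, δ, hv, hw⟩ := hstep
    have h1 := congrFun hv (lastF hn)
    have h2 := congrFun hw (lastF hn)
    rw [Pi.add_apply] at h1 h2
    have hl : lhs n u ρ (lastF hn) = 0 := by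
      match ρ with
      | some i =>
        show sing (emb i) (cc n u (i : ℕ)) (lastF hn) = 0
        rw [sing_apply, if_neg (Ne.symm (emb_ne_lastF hn i))]
      | none => exact uvec_lastF u hn
    omega

/-! ### algebra bridge -/

lemma smul_sing (x : Fin n) (k : ℕ) : k • sing x 1 = sing x k := by
  funext y
  simp only [Pi.smul_apply, sing_apply, smul_eq_mul]
  split <;> omega

lemma sum_smul_sing (v : M n) : ∑ x, v x • sing x 1 = v := by
  funext y
  rw [Finset.sum_apply]
  simp only [Pi.smul_apply, sing_apply, smul_eq_mul, mul_ite, mul_one, mul_zero]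
  rw [Finset.sum_ite_eq Finset.univ y (fun x => v x)]
  simp

noncomputable def phi (c : AddCon (M n)) :
    MvPolynomial (Fin n) ℚ →ₐ[ℚ] AddMonoidAlgebra ℚ c.Quotient :=
  aeval (fun x : Fin n => (AddMonoidAlgebra.single (c.mk' (sing x 1)) (1 : ℚ)))

lemma phi_X (c : AddCon (M n)) (x : Fin n) :
    phi c (X x) = AddMonoidAlgebra.single (c.mk' (sing x 1)) 1 := by
  unfold phi; rw [aeval_X]

lemma phi_X_pow (c : AddCon (M n)) (x : Fin n) (k : ℕ) :
    phi c (X x ^ k) = AddMonoidAlgebra.single (c.mk' (sing x k)) 1 := by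
  rw [map_pow, phi_X, AddMonoidAlgebra.single_pow, one_pow, ← map_nsmul, smul_sing]

lemma phi_monomial (c : AddCon (M n)) (v : M n) :
    phi c (∏ x, X x ^ v x) = AddMonoidAlgebra.single (c.mk' v) 1 := by
  rw [map_prod]
  have h1 : ∀ x : Fin n, phi c (X x ^ v x) = AddMonoidAlgebra.single (c.mk' (sing x (v x))) 1 :=
    fun x => phi_X_pow c x (v x)
  rw [Finset.prod_congr rfl (fun x _ => h1 x), AddMonoidAlgebra.prod_single,
    Finset.prod_const_one, ← map_sum]
  congr 1
  have h2 : ∀ x : Fin n, sing x (v x) = v x • sing x 1 := fun x => (smul_sing x (v x)).symm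
  rw [Finset.sum_congr rfl (fun x _ => h2 x), sum_smul_sing]

lemma aeval_monomial_pow (a : Fin n → ℕ) (v : M n) :
    (aeval (R := ℚ) (fun i : Fin n => (Polynomial.X : Polynomial ℚ) ^ a i)) (∏ x, X x ^ v x)
      = Polynomial.X ^ (valv n a v) := by
  rw [map_prod]
  simp only [map_pow, aeval_X, ← pow_mul]
  rw [Finset.prod_pow_eq_pow_sum]
  congr 1
  exact Finset.sum_congr rfl fun x _ => mul_comm _ _

lemma phi_ntF_zero (hn : 3 ≤ n) (c : AddCon (M n))
    (hgen : ∀ ρ, c (lhs n u ρ) (rhs n u hn ρ)) (i : Fin (n - 1)) :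
    phi c (ntF ℚ n hn u i) = 0 := by
  unfold ntF
  rw [map_sub, map_mul, phi_X_pow, phi_X_pow, phi_X_pow, AddMonoidAlgebra.single_mul_single,
    one_mul, ← map_add]
  have e1 : sing (⟨(i : ℕ), by have := i.isLt; omega⟩ : Fin n) (u (n - 1) (i : ℕ) + u (ntSig n (i : ℕ)) (i : ℕ))
      = lhs n u (some i) := rfl
  have e2 : sing (⟨ntTau n (i : ℕ), by have := i.isLt; unfold ntTau; split <;> omega⟩ : Fin n) (u (i : ℕ) (ntTau n (i : ℕ)))
      + sing (⟨n - 1, by omega⟩ : Fin n) (u (i : ℕ) (n - 1)) = rhs n u hn (some i) := rfl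
  rw [e1, e2]
  have : c.mk' (lhs n u (some i)) = c.mk' (rhs n u hn (some i)) := by
    show ((lhs n u (some i) : M n) : c.Quotient) = ((rhs n u hn (some i) : M n) : c.Quotient)
    rw [AddCon.eq]
    exact hgen (some i)
  rw [this, sub_self]

lemma phi_ntD_zero (hn : 3 ≤ n) (c : AddCon (M n))
    (hgen : ∀ ρ, c (lhs n u ρ) (rhs n u hn ρ)) :
    phi c (ntD ℚ n hn u) = 0 := by
  unfold ntD
  rw [map_sub, map_prod, phi_X_pow]
  have h1 : ∀ i : Fin (n - 1), phi c (X (⟨(i : ℕ), by have := i.isLt; omega⟩ : Fin n) ^ (u (n - 1) (i : ℕ)))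
      = AddMonoidAlgebra.single (c.mk' (sing (emb i) (u (n - 1) (i : ℕ)))) 1 :=
    fun i => phi_X_pow c _ _
  rw [Finset.prod_congr rfl (fun i _ => h1 i), AddMonoidAlgebra.prod_single,
    Finset.prod_const_one, ← map_sum, ← uvec_eq_sum u]
  have e2 : sing (⟨n - 1, by omega⟩ : Fin n) (∑ i : Fin (n - 1), u (i : ℕ) (n - 1))
      = rhs n u hn none := rfl
  rw [e2]
  have : c.mk' (uvec n u) = c.mk' (rhs n u hn none) := by
    show ((uvec n u : M n) : c.Quotient) = ((rhs n u hn none : M n) : c.Quotient)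
    rw [AddCon.eq]
    exact hgen none
  rw [this, sub_self]

lemma rel_of_ker (hn : 3 ≤ n) (a : Fin n → ℕ)
    (hker : RingHom.ker (MvPolynomial.aeval (R := ℚ)
        (fun i : Fin n => (Polynomial.X : Polynomial ℚ) ^ a i)).toRingHom
      = ntIdeal ℚ n hn u) (i : Fin (n - 1)) :
    cc n u (i : ℕ) * a (emb i)
      = u (i : ℕ) (ntTau n (i : ℕ)) * a (emb (tauF i)) + u (i : ℕ) (n - 1) * a (lastF hn) := by
  have hmem : ntF ℚ n hn u i ∈ ntIdeal ℚ n hn u :=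
    Ideal.subset_span (Or.inl ⟨i, rfl⟩)
  rw [← hker, RingHom.mem_ker] at hmem
  unfold ntF at hmem
  rw [map_sub, map_mul] at hmem
  simp only [map_pow, AlgHom.toRingHom_eq_coe, RingHom.coe_coe, aeval_X] at hmem
  rw [← pow_mul, ← pow_mul, ← pow_mul, ← pow_add] at hmem
  rw [sub_eq_zero] at hmem
  have := congrArg Polynomial.natDegree hmem
  rw [Polynomial.natDegree_X_pow, Polynomial.natDegree_X_pow] at this
  have this2 : a (emb i) * (u (n - 1) (i : ℕ) + u (ntSig n (i : ℕ)) (i : ℕ))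
      = a (emb (tauF i)) * u (i : ℕ) (ntTau n (i : ℕ)) + a (lastF hn) * u (i : ℕ) (n - 1) := this
  show cc n u (i : ℕ) * a (emb i) = _
  unfold cc
  rw [mul_comm, this2, mul_comm (a (emb (tauF i))), mul_comm (a (lastF hn))]

lemma relD_of_ker (hn : 3 ≤ n) (a : Fin n → ℕ)
    (hker : RingHom.ker (MvPolynomial.aeval (R := ℚ)
        (fun i : Fin n => (Polynomial.X : Polynomial ℚ) ^ a i)).toRingHom
      = ntIdeal ℚ n hn u) :
    ∑ i : Fin (n - 1), u (n - 1) (i : ℕ) * a (emb i) = EE n u * a (lastF hn) := by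
  have hmem : ntD ℚ n hn u ∈ ntIdeal ℚ n hn u :=
    Ideal.subset_span (Or.inr rfl)
  rw [← hker, RingHom.mem_ker] at hmem
  unfold ntD at hmem
  rw [map_sub, map_prod] at hmem
  simp only [map_pow, AlgHom.toRingHom_eq_coe, RingHom.coe_coe, aeval_X] at hmem
  simp only [← pow_mul] at hmem
  rw [Finset.prod_pow_eq_pow_sum, sub_eq_zero] at hmem
  have := congrArg Polynomial.natDegree hmem
  rw [Polynomial.natDegree_X_pow, Polynomial.natDegree_X_pow] at this
  have this2 : ∑ i : Fin (n - 1), a (emb i) * u (n - 1) (i : ℕ)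
      = a (lastF hn) * ∑ i : Fin (n - 1), u (i : ℕ) (n - 1) := this
  unfold EE
  rw [Finset.sum_congr rfl (fun (i : Fin (n - 1)) _ => mul_comm (u (n - 1) (↑i : ℕ)) (a (emb i))),
    this2, mul_comm]

lemma val_eq_joinR (hn : 3 ≤ n) (a : Fin n → ℕ)
    (hker : RingHom.ker (MvPolynomial.aeval (R := ℚ)
        (fun i : Fin n => (Polynomial.X : Polynomial ℚ) ^ a i)).toRingHom
      = ntIdeal ℚ n hn u)
    (hW : ∀ {v w : M n}, step n u hn v w → Wm n a w < Wm n a v)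
    {v w : M n} (hvw : valv n a v = valv n a w) : joinR n u hn v w := by
  set c := jc u hn a hW with hc
  have hgen : ∀ ρ, c (lhs n u ρ) (rhs n u hn ρ) := fun ρ => jc_gen u hn a hW ρ
  have hmem : (∏ x, X x ^ v x) - (∏ x, X x ^ w x) ∈ ntIdeal ℚ n hn u := by
    rw [← hker, RingHom.mem_ker]
    show (aeval (R := ℚ) (fun i : Fin n => (Polynomial.X : Polynomial ℚ) ^ a i)) _ = 0
    rw [map_sub, aeval_monomial_pow, aeval_monomial_pow, hvw, sub_self]
  have hle : ntIdeal ℚ n hn u ≤ RingHom.ker (phi c).toRingHom := by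
    rw [ntIdeal, Ideal.span_le]
    rintro p hp
    rcases hp with ⟨i, rfl⟩ | rfl
    · rw [SetLike.mem_coe, RingHom.mem_ker]
      exact phi_ntF_zero u hn c hgen i
    · rw [SetLike.mem_coe, RingHom.mem_ker]
      exact phi_ntD_zero u hn c hgen
  have hz := hle hmem
  rw [RingHom.mem_ker] at hz
  have hz2 : phi c ((∏ x, X x ^ v x) - (∏ x, X x ^ w x)) = 0 := hz
  rw [map_sub, phi_monomial, phi_monomial, sub_eq_zero] at hz2
  have hmk : c.mk' v = c.mk' w :=
    AddMonoidAlgebra.single_left_injective (one_ne_zero) hz2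
  have : c v w := by
    rw [← AddCon.eq]
    exact hmk
  exact this

/-! ### combinatorial part -/

lemma step_of_not_reduced (hn : 3 ≤ n) {v : M n} (hred : ¬ reduced n u v) :
    ∃ w, step n u hn v w := by
  rw [reduced, not_and_or] at hred
  rcases hred with hred | hred
  · push_neg at hred
    obtain ⟨i, hi⟩ := hred
    refine ⟨(fun x => v x - lhs n u (some i) x) + rhs n u hn (some i),
      some i, fun x => v x - lhs n u (some i) x, ?_, rfl⟩
    funext x
    simp only [Pi.add_apply, lhs, sing_apply]
    by_cases hx : x = emb i
    · rw [if_pos hx, hx]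
      omega
    · rw [if_neg hx]
      omega
  · push_neg at hred
    refine ⟨(fun x => v x - uvec n u x) + rhs n u hn none,
      none, fun x => v x - uvec n u x, ?_, rfl⟩
    funext x
    show v x = v x - uvec n u x + uvec n u x
    by_cases hx : (x : ℕ) < n - 1
    · have hxe : emb (⟨(x : ℕ), hx⟩ : Fin (n - 1)) = x := Fin.ext rfl
      have := hred ⟨(x : ℕ), hx⟩
      rw [hxe] at this
      have h3 : (((⟨(x : ℕ), hx⟩ : Fin (n - 1))) : ℕ) = (x : ℕ) := rfl
      rw [h3] at this
      have h2 : uvec n u x = u (n - 1) (x : ℕ) := by simp [uvec, hx]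
      omega
    · have h2 : uvec n u x = 0 := by simp [uvec, hx]
      omega

lemma EE_pos (hn : 3 ≤ n) (hupos : ∀ i : Fin (n - 1), 0 < u (i : ℕ) (n - 1)) : 0 < EE n u := by
  unfold EE
  apply Finset.sum_pos (fun i _ => hupos i) ⟨⟨0, by omega⟩, Finset.mem_univ _⟩

lemma step_last_pos (hn : 3 ≤ n) (hupos : ∀ i : Fin (n - 1), 0 < u (i : ℕ) (n - 1))
    {v w : M n} (h : step n u hn v w) : 1 ≤ w (lastF hn) := by
  obtain ⟨ρ, δ, -, hw⟩ := h
  have h2 := congrFun hw (lastF hn)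
  rw [Pi.add_apply] at h2
  have hr : 1 ≤ rhs n u hn ρ (lastF hn) := by
    match ρ with
    | some i =>
      show 1 ≤ (sing (emb (tauF i)) _ + sing (lastF hn) _) (lastF hn)
      rw [Pi.add_apply, sing_apply, sing_apply, if_neg (Ne.symm (emb_ne_lastF hn (tauF i))),
        if_pos rfl]
      have := hupos i
      omega
    | none =>
      show 1 ≤ sing (lastF hn) (EE n u) (lastF hn)
      rw [sing_apply, if_pos rfl]
      exact EE_pos u hn hupos
  omega

lemma joinR_valv (hn : 3 ≤ n) (a : Fin n → ℕ)
    (hrel : ∀ i : Fin (n - 1), cc n u (i : ℕ) * a (emb i)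
      = u (i : ℕ) (ntTau n (i : ℕ)) * a (emb (tauF i)) + u (i : ℕ) (n - 1) * a (lastF hn))
    (hrelD : ∑ i : Fin (n - 1), u (n - 1) (i : ℕ) * a (emb i) = EE n u * a (lastF hn))
    {v w : M n} (h : joinR n u hn v w) : valv n a v = valv n a w := by
  obtain ⟨d, h1, h2⟩ := h
  rw [rtg_valv u a hn hrel hrelD h1, rtg_valv u a hn hrel hrelD h2]

lemma sum_split (hn : 3 ≤ n) {β : Type*} [AddCommMonoid β] (g : Fin n → β) :
    ∑ x, g x = (∑ i : Fin (n - 1), g (emb i)) + g (lastF hn) := by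
  rw [← Finset.sum_erase_add Finset.univ g (Finset.mem_univ (lastF hn))]
  congr 1
  apply Finset.sum_bij' (i := fun (x : Fin n) (hx : x ∈ Finset.univ.erase (lastF hn)) =>
      (⟨(x : ℕ), by
        rw [Finset.mem_erase] at hx
        have := x.isLt
        have hne : (x : ℕ) ≠ n - 1 := fun h => hx.1 (Fin.ext h)
        omega⟩ : Fin (n - 1)))
    (j := fun i _ => emb i)
  · intro x hx; exact Finset.mem_univ _
  · intro x hx; exact Fin.ext rfl
  · intro i _; exact Fin.ext rfl
  · intro x hx; exact congrArg g (Fin.ext rfl)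
  · intro i _
    rw [Finset.mem_erase]
    exact ⟨emb_ne_lastF hn i, Finset.mem_univ _⟩

lemma valv_split (hn : 3 ≤ n) (a : Fin n → ℕ) (v : M n) :
    valv n a v = (∑ i : Fin (n - 1), v (emb i) * a (emb i)) + v (lastF hn) * a (lastF hn) :=
  sum_split hn (fun x => v x * a x)

def muhat (n : ℕ) (u : ℕ → ℕ → ℕ) (j : Fin (n - 1)) : M n := fun x =>
  if h : (x : ℕ) < n - 1 then
    (if (x : ℕ) = (j : ℕ) then u (n - 1) (j : ℕ) - 1 else cc n u (x : ℕ) - 1)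
  else 0

lemma muhat_emb (j i : Fin (n - 1)) :
    muhat n u j (emb i) = if i = j then u (n - 1) (j : ℕ) - 1 else cc n u (i : ℕ) - 1 := by
  unfold muhat
  rw [dif_pos (by simpa using i.isLt)]
  by_cases h : i = j
  · rw [if_pos h, if_pos (by rw [h]; rfl)]
  · rw [if_neg h, if_neg (by simp only [emb_val]; exact fun hh => h (Fin.ext hh))]
    rfl

lemma muhat_last (hn : 3 ≤ n) (j : Fin (n - 1)) : muhat n u j (lastF hn) = 0 := by
  unfold muhat
  rw [dif_neg (by simp)]

lemma muhat_reduced (hn : 3 ≤ n) (j : Fin (n - 1))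
    (hun : ∀ i : Fin (n - 1), 0 < u (n - 1) (i : ℕ))
    (hsig : ∀ i : Fin (n - 1), 0 < u (ntSig n (i : ℕ)) (i : ℕ)) :
    reduced n u (muhat n u j) := by
  constructor
  · intro i
    rw [muhat_emb]
    have h1 := hun i
    have h2 := hsig i
    have h3 := hun j
    have h4 := hsig j
    unfold cc
    by_cases h : i = j
    · rw [if_pos h, h]
      omega
    · rw [if_neg h]
      omega
  · refine ⟨j, ?_⟩
    rw [muhat_emb, if_pos rfl]
    have := hun j
    omega

def Nval (n : ℕ) (u : ℕ → ℕ → ℕ) (a : Fin n → ℕ) : ℕ :=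
  ∑ i : Fin (n - 1), (cc n u (i : ℕ) - 1) * a (emb i)

lemma valv_muhat (hn : 3 ≤ n) (a : Fin n → ℕ)
    (hun : ∀ i : Fin (n - 1), 0 < u (n - 1) (i : ℕ)) (j : Fin (n - 1)) :
    valv n a (muhat n u j) + u (ntSig n (j : ℕ)) (j : ℕ) * a (emb j) = Nval n u a := by
  rw [valv_split hn a, muhat_last u hn, zero_mul, add_zero]
  unfold Nval
  have e1 := Finset.sum_erase_add Finset.univ
    (fun i : Fin (n - 1) => muhat n u j (emb i) * a (emb i)) (Finset.mem_univ j)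
  have e2 := Finset.sum_erase_add Finset.univ
    (fun i : Fin (n - 1) => (cc n u (i : ℕ) - 1) * a (emb i)) (Finset.mem_univ j)
  beta_reduce at e1 e2
  have e3 : ∑ i ∈ Finset.univ.erase j, muhat n u j (emb i) * a (emb i)
      = ∑ i ∈ Finset.univ.erase j, (cc n u (i : ℕ) - 1) * a (emb i) := by
    apply Finset.sum_congr rfl
    intro i hi
    rw [Finset.mem_erase] at hi
    rw [muhat_emb, if_neg hi.1]
  rw [muhat_emb, if_pos rfl] at e1
  rw [e3] at e1
  have hcc : cc n u (j : ℕ) = u (n - 1) (j : ℕ) + u (ntSig n (j : ℕ)) (j : ℕ) := rfl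
  have h1 := hun j
  -- combine
  set Sj := ∑ i ∈ Finset.univ.erase j, (cc n u (i : ℕ) - 1) * a (emb i) with hSj
  set P := u (n - 1) (j : ℕ) with hP
  set Q := u (ntSig n (j : ℕ)) (j : ℕ) with hQ
  set A := a (emb j) with hA
  rw [← e1, ← e2, hcc]
  have : (P + Q - 1) * A = (P - 1) * A + Q * A := by
    have : P + Q - 1 = (P - 1) + Q := by omega
    rw [this, add_mul]
  omega

lemma main_c (hn : 3 ≤ n)
    (hun : ∀ i : Fin (n - 1), 0 < u (n - 1) (i : ℕ))
    (hsig : ∀ i : Fin (n - 1), 0 < u (ntSig n (i : ℕ)) (i : ℕ))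
    (μ : M n) (hred : reduced n u μ) (hlast : μ (lastF hn) = 0)
    (hbump : ∀ j : Fin (n - 1), ¬ reduced n u (μ + sing (emb j) 1)) :
    ∃ j, μ = muhat n u j := by
  -- for each j, the failure of reducedness gives a dichotomy
  have hdich : ∀ j : Fin (n - 1), μ (emb j) = cc n u (j : ℕ) - 1 ∨
      ((∀ i : Fin (n - 1), i ≠ j → u (n - 1) (i : ℕ) ≤ μ (emb i)) ∧
        u (n - 1) (j : ℕ) - 1 ≤ μ (emb j)) := by
    intro j
    have h := hbump j
    rw [reduced, not_and_or] at h
    rcases h with h | h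
    · push_neg at h
      obtain ⟨i, hi⟩ := h
      left
      rw [Pi.add_apply, sing_apply] at hi
      have hic := hred.1 i
      by_cases hij : i = j
      · subst hij
        rw [if_pos rfl] at hi
        omega
      · rw [if_neg (fun hh => hij (emb_injective hh))] at hi
        omega
    · push_neg at h
      right
      constructor
      · intro i hij
        have := h i
        rw [Pi.add_apply, sing_apply, if_neg (fun hh => hij (emb_injective hh))] at this
        omega
      · have := h j
        rw [Pi.add_apply, sing_apply, if_pos rfl] at this
        omega
  obtain ⟨i0, hi0⟩ := hred.2
  -- some j must take the second branch
  have hex : ∃ j, (∀ i : Fin (n - 1), i ≠ j → u (n - 1) (i : ℕ) ≤ μ (emb i)) ∧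
      u (n - 1) (j : ℕ) - 1 ≤ μ (emb j) := by
    by_contra hcon
    push_neg at hcon
    have hall : ∀ j : Fin (n - 1), μ (emb j) = cc n u (j : ℕ) - 1 := by
      intro j
      rcases hdich j with h | h
      · exact h
      · exact absurd h (by
          intro hh
          exact absurd hh.2 (by
            have := hcon j hh.1
            omega))
    have := hall i0
    have h2 := hsig i0
    have h3 := hun i0
    unfold cc at this
    omega
  obtain ⟨j, hj1, hj2⟩ := hex
  -- then i0 = j and μ (emb j) = u (n-1) j - 1
  have hi0j : i0 = j := by
    by_contra hne
    have := hj1 i0 hne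
    omega
  subst hi0j
  have hj : μ (emb i0) = u (n - 1) (i0 : ℕ) - 1 := by omega
  -- all other coordinates take the first branch
  have hother : ∀ i : Fin (n - 1), i ≠ i0 → μ (emb i) = cc n u (i : ℕ) - 1 := by
    intro i hne
    rcases hdich i with h | h
    · exact h
    · exfalso
      have := h.1 i0 (fun hh => hne hh.symm)
      have h3 := hun i0
      omega
  refine ⟨i0, ?_⟩
  funext x
  by_cases hx : (x : ℕ) < n - 1
  · have hxe : emb (⟨(x : ℕ), hx⟩ : Fin (n - 1)) = x := Fin.ext rfl
    rw [← hxe, muhat_emb]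
    by_cases hxi : (⟨(x : ℕ), hx⟩ : Fin (n - 1)) = i0
    · rw [if_pos hxi, hxi, hj]
    · rw [if_neg hxi]
      exact hother _ hxi
  · have hxl : x = lastF hn := by
      apply Fin.ext
      have := x.isLt
      simp only [lastF_val]
      omega
    rw [hxl, hlast, muhat_last]

lemma reduced_add_last (hn : 3 ≤ n) (t : ℕ) {v : M n} (hv : reduced n u v) :
    reduced n u (v + sing (lastF hn) t) := by
  have hco : ∀ i : Fin (n - 1), (v + sing (lastF hn) t) (emb i) = v (emb i) := by
    intro i
    rw [Pi.add_apply, sing_apply, if_neg (emb_ne_lastF hn i), add_zero]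
  constructor
  · intro i
    rw [hco i]
    exact hv.1 i
  · obtain ⟨i, hi⟩ := hv.2
    exact ⟨i, by rw [hco i]; exact hi⟩

lemma sing_sig_reduced (hn : 3 ≤ n)
    (hun : ∀ i : Fin (n - 1), 0 < u (n - 1) (i : ℕ)) (j : Fin (n - 1)) :
    reduced n u (sing (emb j) (u (ntSig n (j : ℕ)) (j : ℕ))) := by
  constructor
  · intro i
    rw [sing_apply]
    have h1 := hun i
    have h2 := hun j
    by_cases h : emb i = emb j
    · rw [if_pos h]
      have : i = j := emb_injective h
      subst this
      show _ < cc n u (i : ℕ)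
      unfold cc
      omega
    · rw [if_neg h]
      show 0 < cc n u (i : ℕ)
      unfold cc
      omega
  · have hn2 : 1 < n - 1 := by omega
    refine ⟨if h : (j : ℕ) = 0 then ⟨1, hn2⟩ else ⟨0, by omega⟩, ?_⟩
    rw [sing_apply, if_neg]
    · split <;> exact hun _
    · have hj := j.isLt
      intro hcon
      rw [Fin.ext_iff] at hcon
      split at hcon <;> simp_all

lemma mem_closure_iff (a : Fin n → ℕ) (m : ℕ) :
    m ∈ AddSubmonoid.closure (Set.range a) ↔ ∃ v : M n, valv n a v = m := by
  constructor
  · intro hm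
    have hT : AddSubmonoid.closure (Set.range a) ≤
        { carrier := {m | ∃ v : M n, valv n a v = m},
          zero_mem' := ⟨0, by simp [valv]⟩,
          add_mem' := by
            rintro x y ⟨v, rfl⟩ ⟨w, rfl⟩
            exact ⟨v + w, valv_add a v w⟩ } := by
      rw [AddSubmonoid.closure_le]
      rintro x ⟨y, rfl⟩
      exact ⟨sing y 1, by rw [valv_sing, one_mul]⟩
    exact hT hm
  · rintro ⟨v, rfl⟩
    unfold valv
    apply AddSubmonoid.sum_mem
    intro x _
    rw [← smul_eq_mul]
    have hx : a x ∈ AddSubmonoid.closure (Set.range a) :=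
      AddSubmonoid.subset_closure (Set.mem_range_self x)
    exact (AddSubmonoid.closure (Set.range a)).nsmul_mem hx (v x)

end NTAux


set_option maxHeartbeats 2000000 in
open NTAux in
theorem northcott_pseudo_frobenius (n : ℕ) (hn : 3 ≤ n) (u : ℕ → ℕ → ℕ) (hu : ntPos n u)
    (a : Fin n → ℕ) (ha : ∀ i, 0 < a i) (hgcd : Finset.univ.gcd a = 1)
    (hker : RingHom.ker (MvPolynomial.aeval (R := ℚ)
        (fun i : Fin n => (Polynomial.X : Polynomial ℚ) ^ a i)).toRingHom
      = ntIdeal ℚ n hn u) :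
    {z : ℤ | (¬ ∃ s ∈ AddSubmonoid.closure (Set.range a), (s : ℤ) = z) ∧
        ∀ s : ℕ, s ∈ AddSubmonoid.closure (Set.range a) → s ≠ 0 →
          ∃ t ∈ AddSubmonoid.closure (Set.range a), (t : ℤ) = z + s}
      = {z : ℤ | ∃ j : Fin (n - 1),
          z = (∑ i : Fin (n - 1), ((u (n - 1) i + u (ntSig n i) i - 1)
                  * a (⟨(i : ℕ), by have := i.isLt; omega⟩ : Fin n) : ℕ) : ℤ)
            - (u (ntSig n j) j * a (⟨(j : ℕ), by have := j.isLt; omega⟩ : Fin n) : ℕ)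
            - (a (⟨n - 1, by omega⟩ : Fin n) : ℕ)} ∧
    Function.Injective (fun j : Fin (n - 1) =>
      (∑ i : Fin (n - 1), ((u (n - 1) i + u (ntSig n i) i - 1)
          * a (⟨(i : ℕ), by have := i.isLt; omega⟩ : Fin n) : ℕ) : ℤ)
        - (u (ntSig n j) j * a (⟨(j : ℕ), by have := j.isLt; omega⟩ : Fin n) : ℕ)
        - (a (⟨n - 1, by omega⟩ : Fin n) : ℕ)) ∧
    Set.ncard {z : ℤ | (¬ ∃ s ∈ AddSubmonoid.closure (Set.range a), (s : ℤ) = z) ∧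
        ∀ s : ℕ, s ∈ AddSubmonoid.closure (Set.range a) → s ≠ 0 →
          ∃ t ∈ AddSubmonoid.closure (Set.range a), (t : ℤ) = z + s} = n - 1 := by
  classical
  have hun : ∀ i : Fin (n - 1), 0 < u (n - 1) (i : ℕ) := fun i => (hu i i.isLt).1
  have hupos : ∀ i : Fin (n - 1), 0 < u (i : ℕ) (n - 1) := fun i => (hu i i.isLt).2.1
  have hsig : ∀ i : Fin (n - 1), 0 < u (ntSig n (i : ℕ)) (i : ℕ) := fun i => (hu i i.isLt).2.2.2
  have hrel := fun i : Fin (n - 1) => rel_of_ker u hn a hker i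
  have hrelD := relD_of_ker u hn a hker
  have hW : ∀ {v w : M n}, step n u hn v w → Wm n a w < Wm n a v :=
    fun h => step_Wm u a hn hrel hupos hun (ha _) (fun i => ha _) h
  have hjoin : ∀ {v w : M n}, valv n a v = valv n a w → joinR n u hn v w :=
    fun h => val_eq_joinR u hn a hker hW h
  have hmu := fun j : Fin (n - 1) => valv_muhat u hn a hun j
  have hmured := fun j : Fin (n - 1) => muhat_reduced u hn j hun hsig
  -- (A) the candidates are not in the semigroup
  have hA : ∀ j : Fin (n - 1), ¬ ∃ s ∈ AddSubmonoid.closure (Set.range a),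
      (s : ℤ) = (Nval n u a : ℤ) - (u (ntSig n (j : ℕ)) (j : ℕ) * a (emb j) : ℕ)
        - (a (lastF hn) : ℕ) := by
    rintro j ⟨s, hs, hsz⟩
    obtain ⟨v, rfl⟩ := (mem_closure_iff a s).1 hs
    have h1 : valv n a (v + sing (lastF hn) 1) = valv n a (muhat n u j) := by
      rw [valv_add a, valv_sing a, one_mul]
      have h2 := hmu j
      set Q := u (ntSig n (j : ℕ)) (j : ℕ) * a (emb j)
      omega
    obtain ⟨d, p1, p2⟩ := hjoin h1
    have hd : d = muhat n u j := (rtg_reduced u p2 (hmured j)).symm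
    subst hd
    have h3 := rtg_last_le u hn p1
    rw [muhat_last u hn] at h3
    have h4 : (v + sing (lastF hn) 1) (lastF hn) = v (lastF hn) + 1 := by
      rw [Pi.add_apply, sing_apply, if_pos rfl]
    omega
  -- (B) candidate plus any generator is in the semigroup
  have hB : ∀ (j : Fin (n - 1)) (x : Fin n), ∃ t ∈ AddSubmonoid.closure (Set.range a),
      (t : ℤ) = ((Nval n u a : ℤ) - (u (ntSig n (j : ℕ)) (j : ℕ) * a (emb j) : ℕ)
        - (a (lastF hn) : ℕ)) + a x := by
    intro j x
    by_cases hx : (x : ℕ) < n - 1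
    · set k : Fin (n - 1) := ⟨(x : ℕ), hx⟩ with hk
      have hxk : x = emb k := Fin.ext rfl
      have hnotred : ¬ reduced n u (muhat n u j + sing (emb k) 1) := by
        intro hred
        by_cases hkj : k = j
        · obtain ⟨i0, hi0⟩ := hred.2
          rw [Pi.add_apply, sing_apply, muhat_emb] at hi0
          have h1 := hun i0
          have h2 := hsig i0
          have h3 := hun j
          have hcc : cc n u (i0 : ℕ) = u (n - 1) (i0 : ℕ) + u (ntSig n (i0 : ℕ)) (i0 : ℕ) := rfl
          by_cases hij : i0 = j
          · rw [if_pos hij, if_pos (by rw [hij, hkj])] at hi0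
            rw [hij] at hi0
            omega
          · rw [if_neg hij, if_neg (fun hh => hij ((emb_injective hh).trans hkj))] at hi0
            omega
        · have h0 := hred.1 k
          rw [Pi.add_apply, sing_apply, if_pos rfl, muhat_emb, if_neg hkj] at h0
          have h1 := hun k
          have hcc : cc n u (k : ℕ) = u (n - 1) (k : ℕ) + u (ntSig n (k : ℕ)) (k : ℕ) := rfl
          omega
      obtain ⟨w, hstepw⟩ := step_of_not_reduced u hn hnotred
      have hvw := step_valv u a hn hrel hrelD hstepw
      have hwlast := step_last_pos u hn hupos hstepw
      have hdecomp : w = (fun y => w y - sing (lastF hn) 1 y) + sing (lastF hn) 1 := by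
        funext y
        simp only [Pi.add_apply, sing_apply]
        by_cases hy : y = lastF hn
        · rw [if_pos hy, hy]
          omega
        · rw [if_neg hy]
          omega
      refine ⟨valv n a (fun y => w y - sing (lastF hn) 1 y),
        (mem_closure_iff a _).2 ⟨_, rfl⟩, ?_⟩
      have hsum : valv n a w = valv n a (fun y => w y - sing (lastF hn) 1 y) + a (lastF hn) := by
        conv_lhs => rw [hdecomp]
        rw [valv_add a, valv_sing a, one_mul]
      have hval1 : valv n a (muhat n u j + sing (emb k) 1)
          = valv n a (muhat n u j) + a (emb k) := by
        rw [valv_add a, valv_sing a, one_mul]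
      have h2 := hmu j
      rw [hxk]
      set Q := u (ntSig n (j : ℕ)) (j : ℕ) * a (emb j)
      omega
    · have hxl : x = lastF hn := Fin.ext (by
        have := x.isLt
        simp only [lastF_val]
        omega)
      refine ⟨valv n a (muhat n u j), (mem_closure_iff a _).2 ⟨_, rfl⟩, ?_⟩
      have h2 := hmu j
      rw [hxl]
      set Q := u (ntSig n (j : ℕ)) (j : ℕ) * a (emb j)
      omega
  have hNcast : ((Nval n u a : ℕ) : ℤ)
      = ∑ i : Fin (n - 1), (((u (n - 1) (i : ℕ) + u (ntSig n (i : ℕ)) (i : ℕ) - 1)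
          * a (⟨(i : ℕ), by have := i.isLt; omega⟩ : Fin n) : ℕ) : ℤ) :=
    Nat.cast_sum _ _
  -- the set equality
  have hseteq : {z : ℤ | (¬ ∃ s ∈ AddSubmonoid.closure (Set.range a), (s : ℤ) = z) ∧
        ∀ s : ℕ, s ∈ AddSubmonoid.closure (Set.range a) → s ≠ 0 →
          ∃ t ∈ AddSubmonoid.closure (Set.range a), (t : ℤ) = z + s}
      = {z : ℤ | ∃ j : Fin (n - 1),
          z = (∑ i : Fin (n - 1), ((u (n - 1) i + u (ntSig n i) i - 1)
                  * a (⟨(i : ℕ), by have := i.isLt; omega⟩ : Fin n) : ℕ) : ℤ)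
            - (u (ntSig n j) j * a (⟨(j : ℕ), by have := j.isLt; omega⟩ : Fin n) : ℕ)
            - (a (⟨n - 1, by omega⟩ : Fin n) : ℕ)} := by
    ext z
    simp only [Set.mem_setOf_eq]
    constructor
    · rintro ⟨hz1, hz2⟩
      obtain ⟨t, ht, htz⟩ := hz2 (a (lastF hn))
        (AddSubmonoid.subset_closure (Set.mem_range_self _)) (ha _).ne'
      obtain ⟨v, rfl⟩ := (mem_closure_iff a t).1 ht
      obtain ⟨μ, hrtgμ, hredμ⟩ := nf_exists u hn hW v
      have hvalμ : valv n a v = valv n a μ := rtg_valv u a hn hrel hrelD hrtgμ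
      have hμlast : μ (lastF hn) = 0 := by
        by_contra hcon
        have hpos : 1 ≤ μ (lastF hn) := Nat.one_le_iff_ne_zero.2 hcon
        have hdec : μ = (fun y => μ y - sing (lastF hn) 1 y) + sing (lastF hn) 1 := by
          funext y
          simp only [Pi.add_apply, sing_apply]
          by_cases hy : y = lastF hn
          · rw [if_pos hy, hy]
            omega
          · rw [if_neg hy]
            omega
        have hv2 : valv n a μ
            = valv n a (fun y => μ y - sing (lastF hn) 1 y) + a (lastF hn) := by
          conv_lhs => rw [hdec]
          rw [valv_add a, valv_sing a, one_mul]
        exact hz1 ⟨valv n a (fun y => μ y - sing (lastF hn) 1 y),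
          (mem_closure_iff a _).2 ⟨_, rfl⟩, by omega⟩
      have hbump : ∀ j : Fin (n - 1), ¬ reduced n u (μ + sing (emb j) 1) := by
        intro j hredb
        obtain ⟨tj, htj, htzj⟩ := hz2 (a (emb j))
          (AddSubmonoid.subset_closure (Set.mem_range_self _)) (ha _).ne'
        obtain ⟨vj, rfl⟩ := (mem_closure_iff a tj).1 htj
        obtain ⟨ν, hrtgν, hredν⟩ := nf_exists u hn hW vj
        have hvalν : valv n a vj = valv n a ν := rtg_valv u a hn hrel hrelD hrtgν
        have hred2 : reduced n u (ν + sing (lastF hn) 1) := reduced_add_last u hn 1 hredν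
        have hveq : valv n a (μ + sing (emb j) 1) = valv n a (ν + sing (lastF hn) 1) := by
          rw [valv_add a, valv_sing a, one_mul, valv_add a, valv_sing a, one_mul]
          omega
        have heq := joinR_reduced_eq u (hjoin hveq) hredb hred2
        have hev := congrFun heq (lastF hn)
        rw [Pi.add_apply, Pi.add_apply, sing_apply, sing_apply,
          if_neg (Ne.symm (emb_ne_lastF hn j)), if_pos rfl, hμlast] at hev
        omega
      obtain ⟨j, hμeq⟩ := main_c u hn hun hsig μ hredμ hμlast hbump
      refine ⟨j, ?_⟩
      rw [← hNcast]
      show z = (Nval n u a : ℤ) - (u (ntSig n (j : ℕ)) (j : ℕ) * a (emb j) : ℕ)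
        - (a (lastF hn) : ℕ)
      have h2 := hmu j
      rw [hμeq] at hvalμ
      set Q := u (ntSig n (j : ℕ)) (j : ℕ) * a (emb j)
      omega
    · rintro ⟨j, hzj⟩
      have hzj' : z = (Nval n u a : ℤ) - (u (ntSig n (j : ℕ)) (j : ℕ) * a (emb j) : ℕ)
          - (a (lastF hn) : ℕ) := by
        rw [hzj, ← hNcast,
          show (a (⟨n - 1, by omega⟩ : Fin n)) = a (lastF hn) from rfl,
          show (a (⟨(j : ℕ), by have := j.isLt; omega⟩ : Fin n)) = a (emb j) from rfl]
      constructor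
      · rw [hzj']
        exact hA j
      · intro s hs hs0
        obtain ⟨v, rfl⟩ := (mem_closure_iff a s).1 hs
        have hvx : ∃ x, v x ≠ 0 := by
          by_contra hcon
          push_neg at hcon
          apply hs0
          unfold valv
          exact Finset.sum_eq_zero (fun x _ => by rw [hcon x, zero_mul])
        obtain ⟨x, hvx⟩ := hvx
        obtain ⟨t, ht, htz⟩ := hB j x
        have hdec : v = (fun y => v y - sing x 1 y) + sing x 1 := by
          funext y
          simp only [Pi.add_apply, sing_apply]
          by_cases hy : y = x
          · rw [if_pos hy, hy]
            omega
          · rw [if_neg hy]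
            omega
        refine ⟨t + valv n a (fun y => v y - sing x 1 y),
          AddSubmonoid.add_mem _ ht ((mem_closure_iff a _).2 ⟨_, rfl⟩), ?_⟩
        have hv2 : valv n a v = valv n a (fun y => v y - sing x 1 y) + a x := by
          conv_lhs => rw [hdec]
          rw [valv_add a, valv_sing a, one_mul]
        set Q := u (ntSig n (j : ℕ)) (j : ℕ) * a (emb j)
        omega
  -- injectivity
  have hinj : Function.Injective (fun j : Fin (n - 1) =>
      (∑ i : Fin (n - 1), ((u (n - 1) i + u (ntSig n i) i - 1)
          * a (⟨(i : ℕ), by have := i.isLt; omega⟩ : Fin n) : ℕ) : ℤ)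
        - (u (ntSig n j) j * a (⟨(j : ℕ), by have := j.isLt; omega⟩ : Fin n) : ℕ)
        - (a (⟨n - 1, by omega⟩ : Fin n) : ℕ)) := by
    intro j k hjk
    simp only at hjk
    rw [← hNcast] at hjk
    have h0 : ((Nval n u a : ℤ) - (u (ntSig n (j : ℕ)) (j : ℕ) * a (emb j) : ℕ)
        - (a (lastF hn) : ℕ))
        = ((Nval n u a : ℤ) - (u (ntSig n (k : ℕ)) (k : ℕ) * a (emb k) : ℕ)
        - (a (lastF hn) : ℕ)) := hjk
    have hQ : u (ntSig n (j : ℕ)) (j : ℕ) * a (emb j)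
        = u (ntSig n (k : ℕ)) (k : ℕ) * a (emb k) := by
      set Q1 := u (ntSig n (j : ℕ)) (j : ℕ) * a (emb j)
      set Q2 := u (ntSig n (k : ℕ)) (k : ℕ) * a (emb k)
      omega
    have hval : valv n a (sing (emb j) (u (ntSig n (j : ℕ)) (j : ℕ)))
        = valv n a (sing (emb k) (u (ntSig n (k : ℕ)) (k : ℕ))) := by
      rw [valv_sing a, valv_sing a]
      exact hQ
    have heq := joinR_reduced_eq u (hjoin hval)
      (sing_sig_reduced u hn hun j) (sing_sig_reduced u hn hun k)
    by_contra hne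
    have hev := congrFun heq (emb j)
    rw [sing_apply, sing_apply, if_pos rfl,
      if_neg (fun hh => hne (emb_injective hh))] at hev
    exact absurd hev (hsig j).ne'
  refine ⟨hseteq, hinj, ?_⟩
  rw [hseteq]
  have hrange : {z : ℤ | ∃ j : Fin (n - 1),
          z = (∑ i : Fin (n - 1), ((u (n - 1) i + u (ntSig n i) i - 1)
                  * a (⟨(i : ℕ), by have := i.isLt; omega⟩ : Fin n) : ℕ) : ℤ)
            - (u (ntSig n j) j * a (⟨(j : ℕ), by have := j.isLt; omega⟩ : Fin n) : ℕ)
            - (a (⟨n - 1, by omega⟩ : Fin n) : ℕ)}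
      = Set.range (fun j : Fin (n - 1) =>
      (∑ i : Fin (n - 1), ((u (n - 1) i + u (ntSig n i) i - 1)
          * a (⟨(i : ℕ), by have := i.isLt; omega⟩ : Fin n) : ℕ) : ℤ)
        - (u (ntSig n j) j * a (⟨(j : ℕ), by have := j.isLt; omega⟩ : Fin n) : ℕ)
        - (a (⟨n - 1, by omega⟩ : Fin n) : ℕ)) := by
    ext z
    simp only [Set.mem_setOf_eq, Set.mem_range]
    exact ⟨fun ⟨j, hj⟩ => ⟨j, hj.symm⟩, fun ⟨j, hj⟩ => ⟨j, hj.symm⟩⟩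
  rw [hrange, ← Set.image_univ, Set.ncard_image_of_injective _ hinj, Set.ncard_univ,
    Nat.card_eq_fintype_card, Fintype.card_fin]
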